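/- Let P ⊂ ℝᵈ be a polytope containing the origin in its interior and let C be a connected component of the complement of the central arrangement {w^⊥ : w vertex of P°}. Then for all u₁, u₂ ∈ C, the set of vertices v of P such that π_{u₁}(v) is a vertex of π_{u₁}(P) equals the set of vertices v such that π_{u₂}(v) is a vertex of π_{u₂}(P). -/

import Mathlib

open RealInnerProductSpace

/-- The polar of a set: `K° = {y : ⟨x,y⟩ ≤ 1 for all x ∈ K}`. -/
def polarSet {d : ℕ} (K : Set (EuclideanSpace ℝ (Fin d))) : Set (EuclideanSpace ℝ (Fin d)) :=
  {y | ∀ x ∈ K, ⟪x, y⟫ ≤ 1}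

/-- Orthogonal projection onto the hyperplane `u^⊥`. -/
noncomputable def projHyp {d : ℕ} (u x : EuclideanSpace ℝ (Fin d)) :
    EuclideanSpace ℝ (Fin d) :=
  x - (⟪u, x⟫ / ⟪u, u⟫) • u

namespace SameChamber

open Set Metric

variable {d : ℕ}

local notation "E" => EuclideanSpace ℝ (Fin d)

lemma zero_mem_polar (K : Set E) : (0 : E) ∈ polarSet K := by
  intro x hx
  simp [polarSet, inner_zero_right]

lemma polarSet_convex (K : Set E) : Convex ℝ (polarSet K) := by
  intro y₁ h₁ y₂ h₂ a b ha hb hab x hx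
  have e : ⟪x, a • y₁ + b • y₂⟫ = a * ⟪x, y₁⟫ + b * ⟪x, y₂⟫ := by
    rw [inner_add_right, real_inner_smul_right, real_inner_smul_right]
  rw [e]
  nlinarith [h₁ x hx, h₂ x hx]

lemma polarSet_isClosed (K : Set E) : IsClosed (polarSet K) := by
  have : polarSet K = ⋂ x ∈ K, {y : E | ⟪x, y⟫ ≤ 1} := by
    ext y; simp [polarSet]
  rw [this]
  exact isClosed_biInter fun x _ =>
    isClosed_le (Continuous.inner continuous_const continuous_id) continuous_const

lemma polarSet_isCompact {P : Set E} (h0 : (0 : E) ∈ interior P) : IsCompact (polarSet P) := by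
  obtain ⟨δ, hδ, hball⟩ := Metric.mem_nhds_iff.1 (mem_interior_iff_mem_nhds.1 h0)
  have hsub : polarSet P ⊆ closedBall 0 (2 / δ) := by
    intro y hy
    rw [mem_closedBall, dist_zero_right]
    rcases eq_or_ne y 0 with rfl | hy0
    · simp; positivity
    · have hn : 0 < ‖y‖ := norm_pos_iff.2 hy0
      set x : E := ((δ / 2) * ‖y‖⁻¹) • y with hx
      have hxm : x ∈ ball (0 : E) δ := by
        rw [mem_ball, dist_zero_right, hx, norm_smul]
        rw [Real.norm_eq_abs, abs_of_pos (by positivity)]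
        rw [mul_assoc, inv_mul_cancel₀ hn.ne', mul_one]
        linarith
      have h1 : ⟪x, y⟫ ≤ 1 := hy x (hball hxm)
      rw [hx, real_inner_smul_left, real_inner_self_eq_norm_sq] at h1
      have : (δ / 2) * ‖y‖ ≤ 1 := by
        calc (δ / 2) * ‖y‖ = δ / 2 * ‖y‖⁻¹ * ‖y‖ ^ 2 := by
              field_simp
          _ ≤ 1 := h1
      rw [le_div_iff₀ hδ]; nlinarith
  exact (isCompact_closedBall (0 : E) (2 / δ)).of_isClosed_subset (polarSet_isClosed P) hsub


lemma P_compact {V : Finset E} {P : Set E} (hP : P = convexHull ℝ (V : Set E)) : IsCompact P := by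
  rw [hP]; exact Set.Finite.isCompact_convexHull ℝ (Finset.finite_toSet V)

lemma P_convex {V : Finset E} {P : Set E} (hP : P = convexHull ℝ (V : Set E)) : Convex ℝ P := by
  rw [hP]; exact convex_convexHull ℝ _

/-- Bipolar-type inclusion: a point with `⟪x,y⟫ ≤ 1` for all `y ∈ P°` lies in `P`. -/
lemma mem_of_forall_polar {V : Finset E} {P : Set E} (hP : P = convexHull ℝ (V : Set E))
    (h0 : (0 : E) ∈ interior P) {x : E}
    (hx : ∀ y ∈ polarSet P, ⟪x, y⟫ ≤ 1) : x ∈ P := by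
  by_contra hxP
  obtain ⟨f, s, hfa, hsx⟩ := geometric_hahn_banach_closed_point (P_convex hP)
    (P_compact hP).isClosed hxP
  have h0P : (0 : E) ∈ P := interior_subset h0
  have hs : 0 < s := by have := hfa 0 h0P; simpa using this
  set y₀ : E := (InnerProductSpace.toDual ℝ E).symm f with hy₀
  have hy₀a : ∀ z : E, ⟪y₀, z⟫ = f z := fun z => InnerProductSpace.toDual_symm_apply
  set y : E := s⁻¹ • y₀ with hy
  have hyP : y ∈ polarSet P := by
    intro a ha
    have : ⟪a, y⟫ = s⁻¹ * f a := by
      rw [hy, real_inner_smul_right, real_inner_comm, hy₀a]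
    rw [this]
    have := (hfa a ha).le
    rw [inv_mul_le_iff₀ hs]; linarith
  have := hx y hyP
  have hxy : ⟪x, y⟫ = s⁻¹ * f x := by
    rw [hy, real_inner_smul_right, real_inner_comm, hy₀a]
  rw [hxy] at this
  have : f x ≤ s := by
    rwa [inv_mul_le_iff₀ hs, mul_one] at this
  linarith

/-- A point with strict inequalities against all of `P°` is interior. -/
lemma mem_interior_of_forall_lt {V : Finset E} {P : Set E} (hP : P = convexHull ℝ (V : Set E))
    (h0 : (0 : E) ∈ interior P) {x : E}
    (hx : ∀ y ∈ polarSet P, ⟪x, y⟫ < 1) : x ∈ interior P := by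
  -- max of ⟪x,·⟫ over compact polar
  have hcomp := polarSet_isCompact (P := P) h0
  have hne : (polarSet P).Nonempty := ⟨0, zero_mem_polar P⟩
  have hcont : ContinuousOn (fun y : E => ⟪x, y⟫) (polarSet P) :=
    (Continuous.inner continuous_const continuous_id).continuousOn
  obtain ⟨y₀, hy₀m, hy₀max'⟩ := hcomp.exists_isMaxOn hne hcont
  have hy₀max : ∀ y ∈ polarSet P, ⟪x, y⟫ ≤ ⟪x, y₀⟫ := fun y hy => hy₀max' hy
  set m := ⟪x, y₀⟫ with hm
  have hm1 : m < 1 := hx y₀ hy₀m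
  -- bound on polar
  obtain ⟨δ, hδ, hball⟩ := Metric.mem_nhds_iff.1 (mem_interior_iff_mem_nhds.1 h0)
  have hRbound : ∀ y ∈ polarSet P, ‖y‖ ≤ 2 / δ := by
    intro y hy
    have hsub := polarSet_isCompact (P := P) h0
    -- redo bound quickly
    rcases eq_or_ne y 0 with rfl | hy0
    · simp; positivity
    · have hn : 0 < ‖y‖ := norm_pos_iff.2 hy0
      have hxm : (((δ / 2) * ‖y‖⁻¹) • y) ∈ ball (0 : E) δ := by
        rw [mem_ball, dist_zero_right, norm_smul]
        rw [Real.norm_eq_abs, abs_of_pos (by positivity)]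
        rw [mul_assoc, inv_mul_cancel₀ hn.ne', mul_one]
        linarith
      have h1 : ⟪((δ / 2) * ‖y‖⁻¹) • y, y⟫ ≤ 1 := hy _ (hball hxm)
      rw [real_inner_smul_left, real_inner_self_eq_norm_sq] at h1
      have h2 : (δ / 2) * ‖y‖ ≤ 1 := by
        calc (δ / 2) * ‖y‖ = δ / 2 * ‖y‖⁻¹ * ‖y‖ ^ 2 := by field_simp
          _ ≤ 1 := h1
      rw [le_div_iff₀ hδ]; nlinarith
  set R := 2 / δ with hR
  have hRpos : 0 < R := by positivity
  -- ball around x of radius (1-m)/(2R)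
  rw [mem_interior_iff_mem_nhds, Metric.mem_nhds_iff]
  refine ⟨(1 - m) / (2 * R), div_pos (by linarith) (by positivity), ?_⟩
  intro x' hx'
  rw [mem_ball, dist_eq_norm] at hx'
  refine mem_of_forall_polar hP h0 (fun y hy => ?_)
  have h1 : ⟪x', y⟫ = ⟪x, y⟫ + ⟪x' - x, y⟫ := by
    rw [← inner_add_left]; congr 1; abel
  have h2 : ⟪x' - x, y⟫ ≤ ‖x' - x‖ * ‖y‖ := real_inner_le_norm _ _
  have h3 : ⟪x, y⟫ ≤ m := hy₀max y hy
  have h4 : ‖y‖ ≤ R := hRbound y hy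
  have h5 : ‖x' - x‖ * ‖y‖ ≤ (1 - m) / (2 * R) * R := by
    apply mul_le_mul hx'.le h4 (norm_nonneg _) (div_pos (by linarith) (by positivity)).le
  have h6 : (1 - m) / (2 * R) * R = (1 - m) / 2 := by field_simp
  rw [h1]; nlinarith

/-- Linear functionals attain their max over a compact convex set at an extreme point. -/
lemma exists_extreme_isMaxOn {T : Set E} (hT : IsCompact T) (hTc : Convex ℝ T)
    (hne : T.Nonempty) (u : E) :
    ∃ w ∈ T.extremePoints ℝ, ∀ y ∈ T, ⟪u, y⟫ ≤ ⟪u, w⟫ := by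
  have hcont : ContinuousOn (fun y : E => ⟪u, y⟫) T :=
    (Continuous.inner continuous_const continuous_id).continuousOn
  obtain ⟨y₀, hy₀m, hy₀max'⟩ := hT.exists_isMaxOn hne hcont
  have hy₀max : ∀ y ∈ T, ⟪u, y⟫ ≤ ⟪u, y₀⟫ := fun y hy => hy₀max' hy
  set M := ⟪u, y₀⟫ with hM
  set A : Set E := {y ∈ T | ⟪u, y⟫ = M} with hA
  have hAsub : A ⊆ T := fun y hy => hy.1
  have hAcomp : IsCompact A := by
    have : IsClosed A := by
      have : A = T ∩ {y : E | ⟪u, y⟫ = M} := rfl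
      rw [this]
      exact IsClosed.inter hT.isClosed
        (isClosed_eq (Continuous.inner continuous_const continuous_id) continuous_const)
    exact hT.of_isClosed_subset this hAsub
  have hAne : A.Nonempty := ⟨y₀, hy₀m, rfl⟩
  have hAconv : Convex ℝ A := by
    intro a ha b hb s t hs ht hst
    refine ⟨hTc ha.1 hb.1 hs ht hst, ?_⟩
    rw [inner_add_right, real_inner_smul_right, real_inner_smul_right, ha.2, hb.2]
    linear_combination M * hst
  have hExt : IsExtreme ℝ T A := by
    refine ⟨hAsub, fun x₁ h₁ x₂ h₂ x hxA hseg => ?_⟩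
    obtain ⟨a, b, ha, hb, hab, hsum⟩ := hseg
    have e1 : ⟪u, x₁⟫ ≤ M := hy₀max _ h₁
    have e2 : ⟪u, x₂⟫ ≤ M := hy₀max _ h₂
    have e3 : a * ⟪u, x₁⟫ + b * ⟪u, x₂⟫ = M := by
      rw [← real_inner_smul_right, ← real_inner_smul_right, ← inner_add_right, hsum]
      exact hxA.2
    have f1 : ⟪u, x₁⟫ = M := by
      by_contra h
      have h' : ⟪u, x₁⟫ < M := lt_of_le_of_ne e1 h
      have k1 := mul_lt_mul_of_pos_left h' ha
      have k2 := mul_le_mul_of_nonneg_left e2 hb.le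
      have k3 : a * M + b * M = M := by linear_combination M * hab
      linarith
    have f2 : ⟪u, x₂⟫ = M := by
      by_contra h
      have h' : ⟪u, x₂⟫ < M := lt_of_le_of_ne e2 h
      have k1 := mul_lt_mul_of_pos_left h' hb
      have k2 := mul_le_mul_of_nonneg_left e1 ha.le
      have k3 : a * M + b * M = M := by linear_combination M * hab
      linarith
    exact ⟨h₁, f1⟩
  obtain ⟨w, hw⟩ := hAcomp.extremePoints_nonempty hAne
  refine ⟨w, hExt.extremePoints_subset_extremePoints hw, ?_⟩
  intro y hy
  have : ⟪u, w⟫ = M := hw.1.2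
  rw [this]
  exact hy₀max y hy

/-- The face `{y ∈ K | ⟪v,y⟫ = 1}` is extreme in `K` when `⟪v,·⟫ ≤ 1` on `K`. -/
lemma isExtreme_face {K : Set E} {v : E} (hv : ∀ y ∈ K, ⟪v, y⟫ ≤ 1) :
    IsExtreme ℝ K {y ∈ K | ⟪v, y⟫ = 1} := by
  refine ⟨fun y hy => hy.1, fun x₁ h₁ x₂ h₂ x hxA hseg => ?_⟩
  obtain ⟨a, b, ha, hb, hab, hsum⟩ := hseg
  have e1 : ⟪v, x₁⟫ ≤ 1 := hv _ h₁
  have e2 : ⟪v, x₂⟫ ≤ 1 := hv _ h₂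
  have e3 : a * ⟪v, x₁⟫ + b * ⟪v, x₂⟫ = 1 := by
    rw [← real_inner_smul_right, ← real_inner_smul_right, ← inner_add_right, hsum]
    exact hxA.2
  have f1 : ⟪v, x₁⟫ = 1 := by
    by_contra h
    have h' : ⟪v, x₁⟫ < 1 := lt_of_le_of_ne e1 h
    have k1 := mul_lt_mul_of_pos_left h' ha
    have k2 := mul_le_mul_of_nonneg_left e2 hb.le
    linarith
  have f2 : ⟪v, x₂⟫ = 1 := by
    by_contra h
    have h' : ⟪v, x₂⟫ < 1 := lt_of_le_of_ne e2 h
    have k1 := mul_lt_mul_of_pos_left h' hb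
    have k2 := mul_le_mul_of_nonneg_left e1 ha.le
    linarith
  exact ⟨h₁, f1⟩


/-- Every extreme point of `P` lies on a face of the polar: `∃ y ∈ P°, ⟪v,y⟫ = 1`. -/
lemma face_nonempty {V : Finset E} {P : Set E} (hP : P = convexHull ℝ (V : Set E))
    (h0 : (0 : E) ∈ interior P) (hd : 1 ≤ d) {v : E}
    (hv : v ∈ Set.extremePoints ℝ P) : ∃ y ∈ polarSet P, ⟪v, y⟫ = 1 := by
  have hvP : v ∈ P := hv.1
  -- v is not interior
  have hvni : v ∉ interior P := by
    intro hvi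
    obtain ⟨ε, hε, hball⟩ := Metric.mem_nhds_iff.1 (mem_interior_iff_mem_nhds.1 hvi)
    set z : E := EuclideanSpace.single (⟨0, hd⟩ : Fin d) (ε / 2) with hz
    have hznorm : ‖z‖ = ε / 2 := by
      rw [hz, EuclideanSpace.norm_single, Real.norm_eq_abs, abs_of_pos (by linarith)]
    have hz0 : z ≠ 0 := by
      intro h
      rw [h, norm_zero] at hznorm; linarith
    have h₁ : v + z ∈ P := hball (by
      rw [mem_ball, dist_eq_norm]; simpa [hznorm] using by linarith)
    have h₂ : v - z ∈ P := hball (by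
      rw [mem_ball, dist_eq_norm]
      have : v - z - v = -z := by abel
      rw [this, norm_neg, hznorm]; linarith)
    have hseg : v ∈ openSegment ℝ (v + z) (v - z) :=
      ⟨1/2, 1/2, by norm_num, by norm_num, by norm_num, by module⟩
    have := hv.2 h₁ h₂ hseg
    apply hz0
    have : v + z - v = 0 := by rw [this]; abel
    simpa using this
  obtain ⟨f, hf⟩ := geometric_hahn_banach_open_point
    ((P_convex hP).interior) isOpen_interior hvni
  -- extend to all of P
  have hfP : ∀ a ∈ P, f a ≤ f v := by
    intro a ha
    have key : ∀ t : ℝ, 0 < t → t ≤ 1 → (1 - t) * f a < f v := by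
      intro t ht ht1
      have hmem : (1 - t) • a + t • (0 : E) ∈ interior P :=
        (P_convex hP).combo_closure_interior_mem_interior (subset_closure ha) h0
          (by linarith) ht (by ring)
      have := hf _ hmem
      simpa [map_smul, smul_eq_mul] using this
    by_contra hc
    push_neg at hc
    rcases le_or_gt (f a) 0 with ha0 | ha0
    · have := key (1/2) (by norm_num) (by norm_num)
      nlinarith
    · have hta : (f a - f v) / (2 * f a) > 0 := by
        apply div_pos (by linarith) (by linarith)
      set t := min (1:ℝ) ((f a - f v) / (2 * f a)) with htdef
      have htpos : 0 < t := lt_min one_pos hta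
      have ht1 : t ≤ 1 := min_le_left _ _
      have := key t htpos ht1
      have hle : t * f a ≤ (f a - f v) / (2 * f a) * f a :=
        mul_le_mul_of_nonneg_right (min_le_right _ _) ha0.le
      have heq : (f a - f v) / (2 * f a) * f a = (f a - f v) / 2 := by
        field_simp
      nlinarith
  have hfne : f v > 0 := by
    have h0P : (0 : E) ∈ interior P := h0
    have := hf 0 h0P
    simpa using this
  set y₀ : E := (InnerProductSpace.toDual ℝ E).symm f with hy₀
  have hy₀a : ∀ z : E, ⟪y₀, z⟫ = f z := fun z => InnerProductSpace.toDual_symm_apply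
  refine ⟨(f v)⁻¹ • y₀, ?_, ?_⟩
  · intro a ha
    have : ⟪a, (f v)⁻¹ • y₀⟫ = (f v)⁻¹ * f a := by
      rw [real_inner_smul_right, real_inner_comm, hy₀a]
    rw [this, inv_mul_le_iff₀ hfne, mul_one]
    exact hfP a ha
  · rw [real_inner_smul_right, real_inner_comm, hy₀a]
    field_simp

/-- A vertex can be strictly separated from the other generators. -/
lemma exists_strict_sep {V : Finset E} {P : Set E} (hP : P = convexHull ℝ (V : Set E))
    {v : E} (hv : v ∈ Set.extremePoints ℝ P) :
    ∃ c : E, ∀ x ∈ V, x ≠ v → ⟪c, x⟫ < ⟪c, v⟫ := by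
  have h1 : v ∈ P \ convexHull ℝ (P \ {v}) :=
    ((P_convex hP).mem_extremePoints_iff_mem_diff_convexHull_diff).1 hv
  have hsub : ((V : Set E) \ {v}) ⊆ P \ {v} := by
    apply diff_subset_diff_left
    rw [hP]; exact subset_convexHull ℝ _
  have hvn : v ∉ convexHull ℝ ((V : Set E) \ {v}) := by
    intro h
    exact h1.2 (convexHull_mono hsub h)
  have hcl : IsClosed (convexHull ℝ ((V : Set E) \ {v})) :=
    Set.Finite.isClosed_convexHull ℝ ((V.finite_toSet).diff)
  obtain ⟨f, s, hfa, hsv⟩ := geometric_hahn_banach_closed_point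
    (convex_convexHull ℝ _) hcl hvn
  set c : E := (InnerProductSpace.toDual ℝ E).symm f with hc
  have hca : ∀ z : E, ⟪c, z⟫ = f z := fun z => InnerProductSpace.toDual_symm_apply
  refine ⟨c, fun x hx hxv => ?_⟩
  rw [hca, hca]
  have : x ∈ convexHull ℝ ((V : Set E) \ {v}) :=
    subset_convexHull ℝ _ ⟨hx, hxv⟩
  exact lt_trans (hfa x this) hsv

lemma projHyp_inner_zero {u z : E} (h : ⟪u, z⟫ = 0) : projHyp u z = z := by
  rw [projHyp, h]; simp

lemma projHyp_add (u x y : E) : projHyp u (x + y) = projHyp u x + projHyp u y := by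
  simp only [projHyp, inner_add_right]
  rw [add_div, add_smul]
  abel

lemma projHyp_self {u : E} (hu : u ≠ 0) : projHyp u u = 0 := by
  rw [projHyp, div_self, one_smul, sub_self]
  exact fun h => hu ((inner_self_eq_zero (𝕜 := ℝ)).1 h)

lemma projHyp_smul (u : E) (t : ℝ) (x : E) : projHyp u (t • x) = t • projHyp u x := by
  simp only [projHyp, real_inner_smul_right, smul_sub]
  rw [mul_div_assoc, mul_smul]

lemma projHyp_neg_eq (u : E) : projHyp (-u) = projHyp u := by
  funext x
  simp only [projHyp, inner_neg_left, inner_neg_right, neg_neg, neg_div, neg_smul, smul_neg]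

/-- inner product with `c ⊥ u` is invariant under `projHyp u`. -/
lemma inner_projHyp {u c : E} (hcu : ⟪u, c⟫ = 0) (x : E) : ⟪c, projHyp u x⟫ = ⟪c, x⟫ := by
  rw [projHyp, inner_sub_right, real_inner_smul_right,
    show ⟪c, u⟫ = (0:ℝ) by rw [real_inner_comm]; exact hcu]
  ring


/-- The main bound: a functional strictly exposing `v` over `V` bounds `P` with equality only
at `v`. -/
lemma inner_le_on_P {V : Finset E} {P : Set E} (hP : P = convexHull ℝ (V : Set E))
    {v c : E} (hvV : v ∈ V) (hc : ∀ x ∈ V, x ≠ v → ⟪c, x⟫ < ⟪c, v⟫) :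
    ∀ p ∈ P, ⟪c, p⟫ ≤ ⟪c, v⟫ ∧ (⟪c, p⟫ = ⟪c, v⟫ → p = v) := by
  intro p hp
  rw [hP, Finset.mem_convexHull'] at hp
  obtain ⟨w, hw0, hw1, hwp⟩ := hp
  have hinner : ⟪c, p⟫ = ∑ y ∈ V, w y * ⟪c, y⟫ := by
    rw [← hwp, inner_sum]
    exact Finset.sum_congr rfl fun y _ => real_inner_smul_right _ _ _
  have hterm : ∀ y ∈ V, w y * ⟪c, y⟫ ≤ w y * ⟪c, v⟫ := fun y hy => by
    rcases eq_or_ne y v with rfl | hyv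
    · exact le_refl _
    · exact mul_le_mul_of_nonneg_left (hc y hy hyv).le (hw0 y hy)
  have hsum : ∑ y ∈ V, w y * ⟪c, v⟫ = ⟪c, v⟫ := by
    rw [← Finset.sum_mul, hw1, one_mul]
  constructor
  · rw [hinner]
    calc ∑ y ∈ V, w y * ⟪c, y⟫ ≤ ∑ y ∈ V, w y * ⟪c, v⟫ := Finset.sum_le_sum hterm
      _ = ⟪c, v⟫ := hsum
  · intro heq
    -- all weight concentrates on v
    have hzero : ∀ y ∈ V, y ≠ v → w y = 0 := by
      intro y₀ hy₀ hy₀v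
      by_contra hwy
      have hwy' : 0 < w y₀ := lt_of_le_of_ne (hw0 y₀ hy₀) (Ne.symm hwy)
      have hstrict : w y₀ * ⟪c, y₀⟫ < w y₀ * ⟪c, v⟫ :=
        mul_lt_mul_of_pos_left (hc y₀ hy₀ hy₀v) hwy'
      have : ∑ y ∈ V, w y * ⟪c, y⟫ < ∑ y ∈ V, w y * ⟪c, v⟫ :=
        Finset.sum_lt_sum hterm ⟨y₀, hy₀, hstrict⟩
      rw [← hinner, hsum, heq] at this
      exact lt_irrefl _ this
    have hwv : w v = 1 := by
      have : ∑ y ∈ V, w y = w v := by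
        apply Finset.sum_eq_single_of_mem v hvV
        intro y hy hyv
        exact hzero y hy hyv
      rw [← this, hw1]
    have : p = ∑ y ∈ V, w y • y := hwp.symm
    rw [this]
    rw [Finset.sum_eq_single_of_mem v hvV (fun y hy hyv => by rw [hzero y hy hyv, zero_smul])]
    rw [hwv, one_smul]

/-- If a functional perpendicular to `u` strictly exposes `v`, then the projection of `v` is
an extreme point of the projected polytope. -/
lemma extreme_proj_of_c {V : Finset E} {P : Set E} (hP : P = convexHull ℝ (V : Set E))
    {v : E} (hv : v ∈ Set.extremePoints ℝ P) {u c : E} (hcu : ⟪u, c⟫ = 0)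
    (hc : ∀ x ∈ V, x ≠ v → ⟪c, x⟫ < ⟪c, v⟫) :
    projHyp u v ∈ Set.extremePoints ℝ (projHyp u '' P) := by
  have hvV : v ∈ V := by
    have := extremePoints_convexHull_subset (hP ▸ hv)
    exact_mod_cast this
  have hbound := inner_le_on_P hP hvV hc
  refine ⟨⟨v, hv.1, rfl⟩, ?_⟩
  rintro x₁ ⟨a, ha, rfl⟩ x₂ ⟨b, hb, rfl⟩ hseg
  obtain ⟨s, t, hs, ht, hst, hsum⟩ := hseg
  have hval : s * ⟪c, a⟫ + t * ⟪c, b⟫ = ⟪c, v⟫ := by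
    have h := congrArg (fun z : E => ⟪c, z⟫) hsum
    simp only [inner_add_right, real_inner_smul_right] at h
    rw [inner_projHyp hcu, inner_projHyp hcu, inner_projHyp hcu] at h
    exact h
  have ha' := hbound a ha
  have hb' := hbound b hb
  have haeq : ⟪c, a⟫ = ⟪c, v⟫ := by
    by_contra h
    have h' : ⟪c, a⟫ < ⟪c, v⟫ := lt_of_le_of_ne ha'.1 h
    have k1 := mul_lt_mul_of_pos_left h' hs
    have k2 := mul_le_mul_of_nonneg_left hb'.1 ht.le
    have k3 : s * ⟪c, v⟫ + t * ⟪c, v⟫ = ⟪c, v⟫ := by linear_combination ⟪c, v⟫ * hst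
    linarith
  have hbeq : ⟪c, b⟫ = ⟪c, v⟫ := by
    by_contra h
    have h' : ⟪c, b⟫ < ⟪c, v⟫ := lt_of_le_of_ne hb'.1 h
    have k1 := mul_lt_mul_of_pos_left h' ht
    have k2 := mul_le_mul_of_nonneg_left ha'.1 hs.le
    have k3 : s * ⟪c, v⟫ + t * ⟪c, v⟫ = ⟪c, v⟫ := by linear_combination ⟪c, v⟫ * hst
    linarith
  rw [ha'.2 haeq]

/-- From two polar vertices on the face of `v` with opposite signs against `u`, produce a
functional perpendicular to `u` strictly exposing `v`. -/
lemma exists_c_perp {V : Finset E} {P : Set E} (hP : P = convexHull ℝ (V : Set E))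
    {v : E} (hv : v ∈ Set.extremePoints ℝ P) {u w₁ w₂ : E}
    (hw₁ : w₁ ∈ polarSet P) (hv₁ : ⟪v, w₁⟫ = 1) (hp : 0 < ⟪u, w₁⟫)
    (hw₂ : w₂ ∈ polarSet P) (hv₂ : ⟪v, w₂⟫ = 1) (hn : ⟪u, w₂⟫ < 0) :
    ∃ c : E, ⟪u, c⟫ = 0 ∧ ∀ x ∈ V, x ≠ v → ⟪c, x⟫ < ⟪c, v⟫ := by
  obtain ⟨c₀, hc₀⟩ := exists_strict_sep hP hv
  have hVP : (V : Set E) ⊆ P := by rw [hP]; exact subset_convexHull ℝ _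
  -- polar vertices support v over all of V
  have hw₁V : ∀ x ∈ V, x ≠ v → ⟪w₁, x⟫ ≤ ⟪w₁, v⟫ := by
    intro x hx _
    rw [(real_inner_comm _ _ : ⟪w₁, x⟫ = ⟪x, w₁⟫), (real_inner_comm _ _ : ⟪w₁, v⟫ = ⟪v, w₁⟫), hv₁]
    exact hw₁ x (hVP hx)
  have hw₂V : ∀ x ∈ V, x ≠ v → ⟪w₂, x⟫ ≤ ⟪w₂, v⟫ := by
    intro x hx _
    rw [(real_inner_comm _ _ : ⟪w₂, x⟫ = ⟪x, w₂⟫), (real_inner_comm _ _ : ⟪w₂, v⟫ = ⟪v, w₂⟫), hv₂]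
    exact hw₂ x (hVP hx)
  rcases eq_or_ne ⟪u, c₀⟫ 0 with h0 | h0
  · exact ⟨c₀, h0, hc₀⟩
  · -- pick w with opposite sign
    have : ∃ w : E, (∀ x ∈ V, x ≠ v → ⟪w, x⟫ ≤ ⟪w, v⟫) ∧ ⟪u, c₀⟫ * ⟪u, w⟫ < 0 := by
      rcases lt_or_gt_of_ne h0 with hneg | hpos
      · exact ⟨w₁, hw₁V, by nlinarith⟩
      · exact ⟨w₂, hw₂V, by nlinarith⟩
    obtain ⟨w, hwV, hsign⟩ := this
    set a := ⟪u, c₀⟫ with hadef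
    set b := ⟪u, w⟫ with hbdef
    have hab : a * b < 0 := hsign
    have hbne : a - b ≠ 0 := by
      intro h
      have : a = b := by linarith
      rw [this] at hab; nlinarith
    set t := a / (a - b) with htdef
    have ht0 : 0 < t := by
      rcases lt_or_gt_of_ne h0 with hneg | hpos
      · have hbpos : 0 < b := by nlinarith
        apply div_pos_of_neg_of_neg hneg (by linarith)
      · have hbneg : b < 0 := by nlinarith
        apply div_pos hpos (by linarith)
    have ht1 : t < 1 := by
      rcases lt_or_gt_of_ne h0 with hneg | hpos
      · have hbpos : 0 < b := by nlinarith
        rw [htdef, div_lt_one_of_neg (by linarith)]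
        linarith
      · have hbneg : b < 0 := by nlinarith
        rw [htdef, div_lt_one (by linarith)]
        linarith
    refine ⟨(1 - t) • c₀ + t • w, ?_, ?_⟩
    · rw [inner_add_right, real_inner_smul_right, real_inner_smul_right, ← hadef, ← hbdef]
      rw [htdef]
      field_simp
      ring
    · intro x hx hxv
      have h1 : ⟪c₀, x⟫ < ⟪c₀, v⟫ := hc₀ x hx hxv
      have h2 : ⟪w, x⟫ ≤ ⟪w, v⟫ := hwV x hx hxv
      rw [inner_add_left, inner_add_left, real_inner_smul_left, real_inner_smul_left,
        real_inner_smul_left, real_inner_smul_left]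
      have k1 : (1 - t) * ⟪c₀, x⟫ < (1 - t) * ⟪c₀, v⟫ :=
        mul_lt_mul_of_pos_left h1 (by linarith)
      have k2 : t * ⟪w, x⟫ ≤ t * ⟪w, v⟫ := mul_le_mul_of_nonneg_left h2 ht0.le
      linarith


lemma exists_perp (hd : 2 ≤ d) {u : E} (hu : u ≠ 0) : ∃ z : E, ⟪u, z⟫ = 0 ∧ z ≠ 0 := by
  have hKbot : ((ℝ ∙ u)ᗮ : Submodule ℝ E) ≠ ⊥ := by
    intro h
    have h1 : Module.finrank ℝ (ℝ ∙ u) = 1 := finrank_span_singleton hu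
    have h2 := Submodule.finrank_add_finrank_orthogonal (K := (ℝ ∙ u : Submodule ℝ E))
    rw [h, h1] at h2
    simp [finrank_euclideanSpace_fin] at h2
    omega
  obtain ⟨z, hz, hz0⟩ := Submodule.exists_mem_ne_zero_of_ne_bot hKbot
  refine ⟨z, ?_, hz0⟩
  exact (Submodule.mem_orthogonal _ _).1 hz u (Submodule.mem_span_singleton_self u)

/-- If `⟪u,·⟫` is negative on the whole polar face of `v`, the projection of `v` along `u`
is not a vertex of the shadow. -/
lemma not_extreme_of_neg {V : Finset E} {P : Set E} (hP : P = convexHull ℝ (V : Set E))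
    (h0 : (0 : E) ∈ interior P) (hd : 2 ≤ d) {v : E} (hv : v ∈ Set.extremePoints ℝ P)
    {u : E} (hu : u ≠ 0) (hneg : ∀ y ∈ polarSet P, ⟪v, y⟫ = 1 → ⟪u, y⟫ < 0) :
    projHyp u v ∉ Set.extremePoints ℝ (projHyp u '' P) := by
  -- find ε with v + ε u interior
  have hcomp := polarSet_isCompact (P := P) h0
  have hvP : v ∈ P := hv.1
  have hvle : ∀ y ∈ polarSet P, ⟪v, y⟫ ≤ 1 := fun y hy => hy v hvP
  obtain ⟨ε, hε, hint⟩ : ∃ ε : ℝ, 0 < ε ∧ (v + ε • u) ∈ interior P := by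
    set K : Set E := {y ∈ polarSet P | 0 ≤ ⟪u, y⟫} with hK
    have hKcomp : IsCompact K := by
      apply hcomp.of_isClosed_subset _ (fun y hy => hy.1)
      have hc : Continuous fun y : E => ⟪u, y⟫ := Continuous.inner continuous_const continuous_id
      have : K = polarSet P ∩ {y : E | 0 ≤ ⟪u, y⟫} := rfl
      rw [this]
      exact IsClosed.inter (polarSet_isClosed P) (isClosed_le continuous_const hc)
    rcases K.eq_empty_or_nonempty with hKe | hKne
    · refine ⟨1, one_pos, ?_⟩
      apply mem_interior_of_forall_lt hP h0
      intro y hy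
      have hyneg : ⟪u, y⟫ < 0 := by
        by_contra hge
        push_neg at hge
        have hyK : y ∈ K := ⟨hy, hge⟩
        rw [hKe] at hyK
        exact absurd hyK (Set.notMem_empty y)
      have := hvle y hy
      rw [inner_add_left, real_inner_smul_left]
      nlinarith
    · -- max of ⟪v,·⟫ on K
      have hcontv : ContinuousOn (fun y : E => ⟪v, y⟫) K :=
        (Continuous.inner continuous_const continuous_id).continuousOn
      obtain ⟨y₁, hy₁K, hy₁max'⟩ := hKcomp.exists_isMaxOn hKne hcontv
      have hy₁max : ∀ y ∈ K, ⟪v, y⟫ ≤ ⟪v, y₁⟫ := fun y hy => hy₁max' hy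
      set m₁ := ⟪v, y₁⟫ with hm₁
      have hm₁lt : m₁ < 1 := by
        rcases lt_or_eq_of_le (hvle y₁ hy₁K.1) with h | h
        · exact h
        · exact absurd hy₁K.2 (not_le.2 (hneg y₁ hy₁K.1 h))
      -- max of ⟪u,·⟫ on polar
      have hcontu : ContinuousOn (fun y : E => ⟪u, y⟫) (polarSet P) :=
        (Continuous.inner continuous_const continuous_id).continuousOn
      obtain ⟨y₂, hy₂m, hy₂max'⟩ := hcomp.exists_isMaxOn ⟨0, zero_mem_polar P⟩ hcontu
      have hy₂max : ∀ y ∈ polarSet P, ⟪u, y⟫ ≤ ⟪u, y₂⟫ := fun y hy => hy₂max' hy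
      set Mf := ⟪u, y₂⟫ with hMf
      have hMf0 : 0 ≤ Mf := by
        obtain ⟨y, hy⟩ := hKne
        exact le_trans hy.2 (hy₂max y hy.1)
      refine ⟨(1 - m₁) / (2 * (Mf + 1)), div_pos (by linarith) (by linarith), ?_⟩
      apply mem_interior_of_forall_lt hP h0
      intro y hy
      rw [inner_add_left, real_inner_smul_left]
      set ε := (1 - m₁) / (2 * (Mf + 1)) with hεdef
      have hεpos : 0 < ε := div_pos (by linarith) (by linarith)
      rcases lt_or_ge ⟪u, y⟫ 0 with hyu | hyu
      · have := hvle y hy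
        nlinarith
      · have hyK : y ∈ K := ⟨hy, hyu⟩
        have h1 : ⟪v, y⟫ ≤ m₁ := hy₁max y hyK
        have h2 : ⟪u, y⟫ ≤ Mf := hy₂max y hy
        have h3 : ε * ⟪u, y⟫ ≤ ε * (Mf + 1) := by
          apply mul_le_mul_of_nonneg_left (by linarith) hεpos.le
        have h4 : ε * (Mf + 1) = (1 - m₁) / 2 := by
          rw [hεdef]; field_simp
        nlinarith
  -- now perturb sideways
  obtain ⟨r, hr, hball⟩ := Metric.mem_nhds_iff.1 (mem_interior_iff_mem_nhds.1 hint)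
  obtain ⟨z, hzu, hz0⟩ := exists_perp hd hu
  have hznorm : 0 < ‖z‖ := norm_pos_iff.2 hz0
  set z' : E := (r / (2 * ‖z‖)) • z with hz'
  have hz'norm : ‖z'‖ = r / 2 := by
    rw [hz', norm_smul, Real.norm_eq_abs, abs_of_pos (by positivity)]
    field_simp
  have hz'0 : z' ≠ 0 := by
    intro h
    rw [h, norm_zero] at hz'norm; linarith
  have hz'u : ⟪u, z'⟫ = 0 := by
    rw [hz', real_inner_smul_right, hzu, mul_zero]
  have hmem : ∀ σ : ℝ, σ = 1 ∨ σ = -1 → v + ε • u + σ • z' ∈ P := by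
    intro σ hσ
    apply hball
    rw [mem_ball, dist_eq_norm]
    have : v + ε • u + σ • z' - (v + ε • u) = σ • z' := by abel
    rw [this, norm_smul, Real.norm_eq_abs]
    rcases hσ with rfl | rfl <;> simp [hz'norm] <;> linarith
  have hprojv : ∀ σ : ℝ, projHyp u (v + ε • u + σ • z') = projHyp u v + σ • z' := by
    intro σ
    rw [projHyp_add, projHyp_add, projHyp_smul, projHyp_smul, projHyp_self hu,
      projHyp_inner_zero hz'u, smul_zero, add_zero]
  intro hext
  have ha : projHyp u v + (1:ℝ) • z' ∈ projHyp u '' P :=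
    ⟨_, hmem 1 (Or.inl rfl), hprojv 1⟩
  have hb : projHyp u v + (-1:ℝ) • z' ∈ projHyp u '' P :=
    ⟨_, hmem (-1) (Or.inr rfl), hprojv (-1)⟩
  have hseg : projHyp u v ∈ openSegment ℝ (projHyp u v + (1:ℝ) • z')
      (projHyp u v + (-1:ℝ) • z') :=
    ⟨1/2, 1/2, by norm_num, by norm_num, by norm_num, by module⟩
  have := hext.2 ha hb hseg
  apply hz'0
  have h := this
  have : (1:ℝ) • z' = 0 := by
    have := congrArg (fun w => w - projHyp u v) h
    simpa using this
  simpa using this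


/-- The key combinatorial characterization (dimension ≥ 2): `π_u(v)` is a vertex of the shadow
iff the face of the polar dual to `v` has polar vertices on both sides of `u^⊥`. -/
lemma key_iff {V : Finset E} {P : Set E} (hP : P = convexHull ℝ (V : Set E))
    (h0 : (0 : E) ∈ interior P) (hd : 2 ≤ d) {u : E}
    (hu : ∀ w ∈ Set.extremePoints ℝ (polarSet P), ⟪u, w⟫ ≠ 0) (hu0 : u ≠ 0)
    {v : E} (hv : v ∈ Set.extremePoints ℝ P) :
    projHyp u v ∈ Set.extremePoints ℝ (projHyp u '' P) ↔
      ((∃ w ∈ Set.extremePoints ℝ (polarSet P), ⟪v, w⟫ = 1 ∧ 0 < ⟪u, w⟫) ∧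
        (∃ w ∈ Set.extremePoints ℝ (polarSet P), ⟪v, w⟫ = 1 ∧ ⟪u, w⟫ < 0)) := by
  have hvP : v ∈ P := hv.1
  have hvle : ∀ y ∈ polarSet P, ⟪v, y⟫ ≤ 1 := fun y hy => hy v hvP
  constructor
  · -- (A) → (C), by contraposition in each conjunct
    intro hA
    by_contra hC
    rw [not_and_or] at hC
    -- the polar face of v
    set T : Set E := {y ∈ polarSet P | ⟪v, y⟫ = 1} with hT
    have hText : IsExtreme ℝ (polarSet P) T := isExtreme_face hvle
    have hTcomp : IsCompact T := by
      apply (polarSet_isCompact (P := P) h0).of_isClosed_subset _ (fun y hy => hy.1)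
      have hc : Continuous fun y : E => ⟪v, y⟫ := Continuous.inner continuous_const continuous_id
      have : T = polarSet P ∩ {y : E | ⟪v, y⟫ = 1} := rfl
      rw [this]
      exact IsClosed.inter (polarSet_isClosed P) (isClosed_eq hc continuous_const)
    have hTconv : Convex ℝ T := by
      intro a ha b hb s t hs ht hst
      refine ⟨polarSet_convex P ha.1 hb.1 hs ht hst, ?_⟩
      rw [inner_add_right, real_inner_smul_right, real_inner_smul_right, ha.2, hb.2]
      linarith
    have hTne : T.Nonempty := by
      obtain ⟨y, hy1, hy2⟩ := face_nonempty hP h0 (by omega) hv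
      exact ⟨y, hy1, hy2⟩
    rcases hC with hC | hC
    · -- no positive polar vertex on the face : all negative
      push_neg at hC
      have hall : ∀ w ∈ Set.extremePoints ℝ (polarSet P), ⟪v, w⟫ = 1 → ⟪u, w⟫ < 0 := by
        intro w hw hw1
        exact lt_of_le_of_ne (hC w hw hw1) (hu w hw)
      have hneg : ∀ y ∈ polarSet P, ⟪v, y⟫ = 1 → ⟪u, y⟫ < 0 := by
        intro y hy hy1
        obtain ⟨w, hwext, hwmax⟩ := exists_extreme_isMaxOn hTcomp hTconv hTne u
        have hwpolar : w ∈ Set.extremePoints ℝ (polarSet P) :=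
          hText.extremePoints_subset_extremePoints hwext
        have hw1 : ⟪v, w⟫ = 1 := hwext.1.2
        have hwneg : ⟪u, w⟫ < 0 := hall w hwpolar hw1
        exact lt_of_le_of_lt (hwmax y ⟨hy, hy1⟩) hwneg
      exact absurd hA (not_extreme_of_neg hP h0 hd hv hu0 hneg)
    · -- no negative polar vertex on the face : all positive; use -u
      push_neg at hC
      have hall : ∀ w ∈ Set.extremePoints ℝ (polarSet P), ⟪v, w⟫ = 1 → 0 < ⟪u, w⟫ := by
        intro w hw hw1
        exact lt_of_le_of_ne (hC w hw hw1) (Ne.symm (hu w hw))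
      have hneg : ∀ y ∈ polarSet P, ⟪v, y⟫ = 1 → ⟪-u, y⟫ < 0 := by
        intro y hy hy1
        obtain ⟨w, hwext, hwmax⟩ := exists_extreme_isMaxOn hTcomp hTconv hTne (-u)
        have hwpolar : w ∈ Set.extremePoints ℝ (polarSet P) :=
          hText.extremePoints_subset_extremePoints hwext
        have hw1 : ⟪v, w⟫ = 1 := hwext.1.2
        have hwneg : ⟪-u, w⟫ < 0 := by
          rw [inner_neg_left]
          have := hall w hwpolar hw1
          linarith
        exact lt_of_le_of_lt (hwmax y ⟨hy, hy1⟩) hwneg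
      have hnu : (-u : E) ≠ 0 := fun h => hu0 (by simpa using congrArg Neg.neg h)
      have := not_extreme_of_neg hP h0 hd hv hnu hneg
      rw [projHyp_neg_eq] at this
      exact absurd hA this
  · -- (C) → (A)
    rintro ⟨⟨w₁, hw₁ext, hv₁, hp⟩, ⟨w₂, hw₂ext, hv₂, hn⟩⟩
    obtain ⟨c, hcu, hc⟩ := exists_c_perp hP hv (extremePoints_subset hw₁ext) hv₁ hp
      (extremePoints_subset hw₂ext) hv₂ hn
    exact extreme_proj_of_c hP hv hcu hc

end SameChamber

/-- For a polytope `P` with the origin in its interior and two directions `u₁, u₂` in the same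
connected component of the complement of the central arrangement `{w^⊥ : w vertex of P°}`,
the set of vertices of `P` projecting to vertices of `π_{u₁}(P)` equals the set of vertices of
`P` projecting to vertices of `π_{u₂}(P)`. -/


theorem same_projected_vertices_of_same_chamber {d : ℕ} (V : Finset (EuclideanSpace ℝ (Fin d)))
    (P : Set (EuclideanSpace ℝ (Fin d)))
    (hP : P = convexHull ℝ (V : Set (EuclideanSpace ℝ (Fin d))))
    (h0 : (0 : EuclideanSpace ℝ (Fin d)) ∈ interior P)
    (S : Set (EuclideanSpace ℝ (Fin d)))
    (hS : S = {x | ∀ w ∈ Set.extremePoints ℝ (polarSet P), ⟪x, w⟫ ≠ 0})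
    (u₁ u₂ : EuclideanSpace ℝ (Fin d)) (hu₁ : u₁ ∈ S)
    (hu₂ : u₂ ∈ connectedComponentIn S u₁) :
    {v ∈ Set.extremePoints ℝ P | projHyp u₁ v ∈ Set.extremePoints ℝ (projHyp u₁ '' P)} =
      {v ∈ Set.extremePoints ℝ P | projHyp u₂ v ∈ Set.extremePoints ℝ (projHyp u₂ '' P)} := by
  classical
  have hu₂S : u₂ ∈ S := connectedComponentIn_subset S u₁ hu₂
  have hu₁' : ∀ w ∈ Set.extremePoints ℝ (polarSet P), ⟪u₁, w⟫ ≠ 0 := by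
    rw [hS] at hu₁; exact hu₁
  have hu₂' : ∀ w ∈ Set.extremePoints ℝ (polarSet P), ⟪u₂, w⟫ ≠ 0 := by
    rw [hS] at hu₂S; exact hu₂S
  have hWne : (Set.extremePoints ℝ (polarSet P)).Nonempty :=
    (SameChamber.polarSet_isCompact h0).extremePoints_nonempty ⟨0, SameChamber.zero_mem_polar P⟩
  obtain ⟨w₀, hw₀⟩ := hWne
  have hu₁0 : u₁ ≠ 0 := fun h => hu₁' w₀ hw₀ (by rw [h, inner_zero_left])
  have hu₂0 : u₂ ≠ 0 := fun h => hu₂' w₀ hw₀ (by rw [h, inner_zero_left])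
  rcases Nat.lt_or_ge d 2 with hd | hd
  · interval_cases d
    · -- d = 0 : the space is trivial
      have : u₁ = u₂ := PiLp.ext fun i => i.elim0
      rw [this]
    · -- d = 1 : every projection is the origin
      have hinner : ∀ a b : EuclideanSpace ℝ (Fin 1), ⟪a, b⟫ = a 0 * b 0 := by
        intro a b
        simp [PiLp.inner_apply, RCLike.inner_apply, Fin.sum_univ_one]
        ring
      have hproj : ∀ u : EuclideanSpace ℝ (Fin 1), u ≠ 0 → ∀ x, projHyp u x = 0 := by
        intro u hu x
        have hu00 : u 0 ≠ 0 := by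
          intro h
          apply hu
          ext i
          rw [Fin.eq_zero i, h]; rfl
        rw [projHyp, hinner, hinner]
        ext i
        rw [Fin.eq_zero i]
        have hcoord : (x - (x 0 * u 0 / (u 0 * u 0)) • u) 0
            = x 0 - (x 0 * u 0 / (u 0 * u 0)) * u 0 := rfl
        rw [mul_comm (u 0) (x 0)] at *
        rw [hcoord]
        have : x 0 - x 0 * u 0 / (u 0 * u 0) * u 0 = 0 := by
          field_simp
          ring
        rw [this]; rfl
      have himg : ∀ u : EuclideanSpace ℝ (Fin 1), u ≠ 0 → projHyp u '' P = {0} := by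
        intro u hu
        have hPne : P.Nonempty := ⟨0, interior_subset h0⟩
        ext y
        constructor
        · rintro ⟨p, hp, rfl⟩
          rw [hproj u hu p]; rfl
        · intro hy
          rw [Set.mem_singleton_iff] at hy
          exact ⟨hPne.choose, hPne.choose_spec, by rw [hproj u hu, hy]⟩
      ext v
      simp only [Set.mem_sep_iff]
      constructor
      · rintro ⟨h1, -⟩
        refine ⟨h1, ?_⟩
        rw [himg u₂ hu₂0, extremePoints_singleton, hproj u₂ hu₂0 v]
        rfl
      · rintro ⟨h1, -⟩
        refine ⟨h1, ?_⟩
        rw [himg u₁ hu₁0, extremePoints_singleton, hproj u₁ hu₁0 v]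
        rfl
  · -- d ≥ 2 : the main case
    have hCpre : IsPreconnected (connectedComponentIn S u₁) :=
      isPreconnected_connectedComponentIn
    have hu₁C : u₁ ∈ connectedComponentIn S u₁ := mem_connectedComponentIn hu₁
    have hsub := connectedComponentIn_subset S u₁
    have hivt : ∀ w ∈ Set.extremePoints ℝ (polarSet P), ∀ a b : EuclideanSpace ℝ (Fin d),
        a ∈ connectedComponentIn S u₁ → b ∈ connectedComponentIn S u₁ →
        ⟪a, w⟫ ≤ 0 → 0 ≤ ⟪b, w⟫ → False := by
      intro w hw a b ha hb hna hpb
      have hcont : ContinuousOn (fun x : EuclideanSpace ℝ (Fin d) => ⟪x, w⟫)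
          (connectedComponentIn S u₁) :=
        (Continuous.inner continuous_id continuous_const).continuousOn
      obtain ⟨x, hxC, hx0⟩ := hCpre.intermediate_value ha hb hcont ⟨hna, hpb⟩
      have hxS := hsub hxC
      rw [hS] at hxS
      exact hxS w hw hx0
    have hsgnpos : ∀ w ∈ Set.extremePoints ℝ (polarSet P),
        (0 < ⟪u₁, w⟫ ↔ 0 < ⟪u₂, w⟫) := by
      intro w hw
      constructor
      · intro h1
        rcases lt_or_ge 0 ⟪u₂, w⟫ with h | h
        · exact h
        · exact (hivt w hw u₂ u₁ hu₂ hu₁C h h1.le).elim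
      · intro h1
        rcases lt_or_ge 0 ⟪u₁, w⟫ with h | h
        · exact h
        · exact (hivt w hw u₁ u₂ hu₁C hu₂ h h1.le).elim
    have hsgnneg : ∀ w ∈ Set.extremePoints ℝ (polarSet P),
        (⟪u₁, w⟫ < 0 ↔ ⟪u₂, w⟫ < 0) := by
      intro w hw
      constructor
      · intro h1
        rcases lt_or_ge ⟪u₂, w⟫ 0 with h | h
        · exact h
        · exact (hivt w hw u₁ u₂ hu₁C hu₂ h1.le h).elim
      · intro h1
        rcases lt_or_ge ⟪u₁, w⟫ 0 with h | h
        · exact h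
        · exact (hivt w hw u₂ u₁ hu₂ hu₁C h1.le h).elim
    ext v
    simp only [Set.mem_sep_iff]
    constructor
    · rintro ⟨hvext, hproj1⟩
      refine ⟨hvext, ?_⟩
      rw [SameChamber.key_iff hP h0 hd hu₂' hu₂0 hvext]
      rw [SameChamber.key_iff hP h0 hd hu₁' hu₁0 hvext] at hproj1
      obtain ⟨⟨w₁, hw₁, h₁a, h₁b⟩, ⟨w₂, hw₂, h₂a, h₂b⟩⟩ := hproj1
      exact ⟨⟨w₁, hw₁, h₁a, (hsgnpos w₁ hw₁).1 h₁b⟩,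
        ⟨w₂, hw₂, h₂a, (hsgnneg w₂ hw₂).1 h₂b⟩⟩
    · rintro ⟨hvext, hproj2⟩
      refine ⟨hvext, ?_⟩
      rw [SameChamber.key_iff hP h0 hd hu₁' hu₁0 hvext]
      rw [SameChamber.key_iff hP h0 hd hu₂' hu₂0 hvext] at hproj2
      obtain ⟨⟨w₁, hw₁, h₁a, h₁b⟩, ⟨w₂, hw₂, h₂a, h₂b⟩⟩ := hproj2
      exact ⟨⟨w₁, hw₁, h₁a, (hsgnpos w₁ hw₁).2 h₁b⟩,
        ⟨w₂, hw₂, h₂a, (hsgnneg w₂ hw₂).2 h₂b⟩⟩
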